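/- arXiv:2312.16699 — 5 statements merged into one kernel-verified Lean document; each statement's English description precedes it below -/
import Mathlib

section
/- (Correctness of the big-M ReLU formulation, forward direction.) Let LB, UB, a ∈ ℝ with LB ≤ 0 ≤ UB and LB ≤ a ≤ UB. Define h = max(a, 0), h̄ = max(−a, 0), and z = 1 if a > 0 and z = 0 otherwise. Then a = h − h̄, 0 ≤ h ≤ UB·z, 0 ≤ h̄ ≤ −LB·(1 − z), and z ∈ {0, 1}. In other words, the true ReLU input-output pair is always feasible for the big-M mixed-integer constraints whenever LB and UB are valid activation bounds. -/
/-- Correctness of the big-M ReLU formulation, forward direction: the true ReLU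
input-output pair, together with `h̄ = max (−a) 0` and the indicator `z` of `a > 0`,
is feasible for the big-M mixed-integer constraints whenever `LB ≤ 0 ≤ UB` are
valid activation bounds and `LB ≤ a ≤ UB`. -/
theorem bigM_relu_forward (LB UB a : ℝ)
    (hLB : LB ≤ 0) (hUB : 0 ≤ UB) (haLB : LB ≤ a) (haUB : a ≤ UB)
    (h hbar z : ℝ)
    (hh : h = max a 0) (hhbar : hbar = max (-a) 0)
    (hz : z = if 0 < a then 1 else 0) :
    a = h - hbar ∧ 0 ≤ h ∧ h ≤ UB * z ∧ 0 ≤ hbar ∧ hbar ≤ -LB * (1 - z) ∧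
      (z = 0 ∨ z = 1) := by
  subst hh hhbar hz
  rcases le_or_gt a 0 with ha | ha
  · rw [max_eq_right ha, max_eq_left (neg_nonneg.2 ha)]
    simp [not_lt.2 ha]
    and_intros <;> linarith
  · rw [max_eq_left ha.le, max_eq_right (neg_nonpos.2 ha.le)]
    simp [ha]
    and_intros <;> linarith
end

section
/- (Correctness of the big-M ReLU formulation, converse direction.) Let LB, UB, a, h, h̄, z ∈ ℝ satisfy a = h − h̄, 0 ≤ h ≤ UB·z, 0 ≤ h̄ ≤ −LB·(1 − z), and z ∈ {0, 1}. Then h = max(a, 0), i.e., every feasible point of the big-M mixed-integer constraints computes exactly the ReLU function. -/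
/-- Correctness of the big-M ReLU formulation, converse direction: every feasible
point of the big-M mixed-integer constraints computes exactly the ReLU function,
i.e. `h = max a 0`. -/
theorem bigM_relu_converse (LB UB a h hbar z : ℝ)
    (heq : a = h - hbar)
    (hh0 : 0 ≤ h) (hhub : h ≤ UB * z)
    (hhbar0 : 0 ≤ hbar) (hhbarub : hbar ≤ -LB * (1 - z))
    (hz : z = 0 ∨ z = 1) :
    h = max a 0 := by
  rcases hz with rfl | rfl
  · have hh : h = 0 := le_antisymm (by linarith) hh0
    have : a ≤ 0 := by linarith
    simp [hh, max_eq_right this]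
  · have hb : hbar = 0 := le_antisymm (by linarith) hhbar0
    have : 0 ≤ a := by linarith
    rw [max_eq_left this]; linarith
end

section
/- (Validity of the MILP bound-tightening formulation.) Consider a fully connected feed-forward ReLU network with layers 0,…,m (m ≥ 1): widths n_0,…,n_m ≥ 1, weight matrices W^{(l)} ∈ ℝ^{n_l×n_{l+1}} and biases b^{(l+1)} ∈ ℝ^{n_{l+1}}; on input x it computes h^{(0)} = x, a^{(l+1)} = (W^{(l)})ᵀ h^{(l)} + b^{(l+1)}, h^{(l+1)}_j = max(a^{(l+1)}_j, 0). Let LB⁰, UB⁰ ∈ ℝ^{n_0} and, for each hidden layer l ∈ {1,…,m−1}, let LB^{(l)}, UB^{(l)} ∈ ℝ^{n_l} be bounds. Fix an input x with LB⁰_j ≤ x_j ≤ UB⁰_j for all j whose pre-activations satisfy LB^{(l)}_j ≤ a^{(l)}_j ≤ UB^{(l)}_j for all l ∈ {1,…,m−1} and all j. Define, for each l ∈ {1,…,m−1} and j, h̄^{(l)}_j = max(−a^{(l)}_j, 0) and z^{(l)}_j = 1 if a^{(l)}_j > 0, else 0. Then the point (h^{(0)},…,h^{(m−1)}, h̄^{(1)},…,h̄^{(m−1)},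 z^{(1)},…,z^{(m−1)}) satisfies all the MILP constraints: (W^{(l)})ᵀ h^{(l)} + b^{(l+1)} = a^{(l+1)} for l = 0,…,m−1; a^{(l)} = h^{(l)} − h̄^{(l)}, 0 ≤ h^{(l)}_j ≤ UB^{(l)}_j z^{(l)}_j, 0 ≤ h̄^{(l)}_j ≤ −LB^{(l)}_j (1 − z^{(l)}_j), z^{(l)}_j ∈ {0,1} for l = 1,…,m−1; and LB⁰_j ≤ h^{(0)}_j ≤ UB⁰_j. In particular, the optimal value of the MILP that maximizes a^{(m)}_n over these constraints is an upper bound on a^{(m)}_n(x). -/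
/-- Validity of the MILP bound-tightening formulation: for a fully connected
feed-forward ReLU network with layers `0, …, m` (here `m = m' + 1 ≥ 1`), any input
`x ∈ [LB⁰, UB⁰]` whose hidden-layer pre-activations respect the given bounds gives
rise, via `h̄ = max (−a) 0` and `z = 𝟙[a > 0]`, to a point satisfying all the MILP
constraints of the bound-tightening problem. -/
theorem milp_bound_tightening_valid (m' : ℕ)
    (n : ℕ → ℕ) (hwidth : ∀ l, l ≤ m' + 1 → 1 ≤ n l)
    (W : ∀ l : ℕ, Matrix (Fin (n l)) (Fin (n (l + 1))) ℝ)
    -- `b l` is the bias vector `b^{(l+1)} ∈ ℝ^{n_{l+1}}`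
    (b : ∀ l : ℕ, Fin (n (l + 1)) → ℝ)
    -- `LB l`, `UB l` are the bounds for layer `l` (input layer for `l = 0`)
    (LB UB : ∀ l : ℕ, Fin (n l) → ℝ)
    (x : Fin (n 0) → ℝ)
    (h : ∀ l : ℕ, Fin (n l) → ℝ)
    -- `a l` is the pre-activation vector `a^{(l+1)} ∈ ℝ^{n_{l+1}}`
    (a : ∀ l : ℕ, Fin (n (l + 1)) → ℝ)
    (hh0 : h 0 = x)
    (haff : ∀ l, l ≤ m' → ∀ i : Fin (n (l + 1)),
      a l i = (∑ j : Fin (n l), W l j i * h l j) + b l i)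
    (hrelu : ∀ l, l < m' → ∀ i : Fin (n (l + 1)), h (l + 1) i = max (a l i) 0)
    (hx : ∀ j : Fin (n 0), LB 0 j ≤ x j ∧ x j ≤ UB 0 j)
    (hvalid : ∀ l, l < m' → ∀ i : Fin (n (l + 1)),
      LB (l + 1) i ≤ a l i ∧ a l i ≤ UB (l + 1) i)
    -- `hbar (l+1)` and `z (l+1)` are defined as `max (−a^{(l+1)}) 0` and `𝟙[a^{(l+1)} > 0]`
    (hbar z : ∀ l : ℕ, Fin (n (l + 1)) → ℝ)
    (hhbar : ∀ l, l < m' → ∀ i : Fin (n (l + 1)), hbar l i = max (-(a l i)) 0)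
    (hz : ∀ l, l < m' → ∀ i : Fin (n (l + 1)),
      z l i = if 0 < a l i then 1 else 0) :
    -- the point satisfies all the MILP constraints:
    (∀ l, l ≤ m' → ∀ i : Fin (n (l + 1)),
      (∑ j : Fin (n l), W l j i * h l j) + b l i = a l i) ∧
    (∀ l, l < m' → ∀ i : Fin (n (l + 1)),
      a l i = h (l + 1) i - hbar l i ∧
      0 ≤ h (l + 1) i ∧ h (l + 1) i ≤ UB (l + 1) i * z l i ∧
      0 ≤ hbar l i ∧ hbar l i ≤ -(LB (l + 1) i) * (1 - z l i) ∧
      (z l i = 0 ∨ z l i = 1)) ∧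
    (∀ j : Fin (n 0), LB 0 j ≤ h 0 j ∧ h 0 j ≤ UB 0 j) := by
  refine ⟨fun l hl i => (haff l hl i).symm, fun l hl i => ?_, fun j => hh0 ▸ hx j⟩
  have hH := hrelu l hl i
  have hHb := hhbar l hl i
  have hZ := hz l hl i
  have hV := hvalid l hl i
  by_cases hpos : 0 < a l i
  · rw [hH, hHb, hZ, if_pos hpos, max_eq_left hpos.le, max_eq_right (by linarith)]
    refine ⟨by ring, hpos.le, by linarith [hV.2], le_refl 0, by linarith, Or.inr rfl⟩
  · push_neg at hpos
    rw [hH, hHb, hZ, if_neg (not_lt.mpr hpos), max_eq_right hpos,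
      max_eq_left (by linarith)]
    refine ⟨by ring, le_refl 0, by simp, by linarith, by linarith [hV.1], Or.inl rfl⟩
end

section
/- (Exactness of the MILP bound-tightening formulation.) Consider weight matrices W^{(l)} ∈ ℝ^{n_l×n_{l+1}} and biases b^{(l+1)} ∈ ℝ^{n_{l+1}} for l = 0,…,m−1 (m ≥ 1, all widths ≥ 1), input bounds LB⁰, UB⁰ ∈ ℝ^{n_0}, and hidden-layer bounds LB^{(l)}, UB^{(l)} ∈ ℝ^{n_l} for l ∈ {1,…,m−1}. Suppose vectors h^{(0)},…,h^{(m−1)}, h̄^{(1)},…,h̄^{(m−1)}, z^{(1)},…,z^{(m−1)}, a^{(1)},…,a^{(m)} satisfy: (W^{(l)})ᵀ h^{(l)} + b^{(l+1)} = a^{(l+1)} for l = 0,…,m−1; a^{(l)} = h^{(l)} − h̄^{(l)}, 0 ≤ h^{(l)}_j ≤ UB^{(l)}_j z^{(l)}_j, 0 ≤ h̄^{(l)}_j ≤ −LB^{(l)}_j (1 − z^{(l)}_j), z^{(l)}_j ∈ {0,1} for l = 1,…,m−1 and all j; and LB⁰_j ≤ h^{(0)}_j ≤ UB⁰_j. Then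 for every l ∈ {1,…,m−1} and every j, h^{(l)}_j = max(a^{(l)}_j, 0); that is, every MILP-feasible point coincides with the actual evaluation of the ReLU network on the input x = h^{(0)} ∈ [LB⁰, UB⁰]. -/
/-- Exactness of the MILP bound-tightening formulation: every point feasible for the
MILP constraints (with `m = m' + 1 ≥ 1` layers) coincides with the actual evaluation
of the ReLU network on the input `x = h⁰ ∈ [LB⁰, UB⁰]`, i.e. each hidden activation
satisfies `h^{(l+1)} = max (a^{(l+1)}) 0`. -/
theorem milp_bound_tightening_exact (m' : ℕ)
    (n : ℕ → ℕ) (hwidth : ∀ l, l ≤ m' + 1 → 1 ≤ n l)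
    (W : ∀ l : ℕ, Matrix (Fin (n l)) (Fin (n (l + 1))) ℝ)
    -- `b l` is the bias vector `b^{(l+1)} ∈ ℝ^{n_{l+1}}`
    (b : ∀ l : ℕ, Fin (n (l + 1)) → ℝ)
    -- `LB l`, `UB l` are the bounds for layer `l` (input layer for `l = 0`)
    (LB UB : ∀ l : ℕ, Fin (n l) → ℝ)
    (h : ∀ l : ℕ, Fin (n l) → ℝ)
    -- `a l`, `hbar l`, `z l` live in layer `l + 1`
    (a hbar z : ∀ l : ℕ, Fin (n (l + 1)) → ℝ)
    (haff : ∀ l, l ≤ m' → ∀ i : Fin (n (l + 1)),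
      (∑ j : Fin (n l), W l j i * h l j) + b l i = a l i)
    (hmilp : ∀ l, l < m' → ∀ i : Fin (n (l + 1)),
      a l i = h (l + 1) i - hbar l i ∧
      0 ≤ h (l + 1) i ∧ h (l + 1) i ≤ UB (l + 1) i * z l i ∧
      0 ≤ hbar l i ∧ hbar l i ≤ -(LB (l + 1) i) * (1 - z l i) ∧
      (z l i = 0 ∨ z l i = 1))
    (hbox : ∀ j : Fin (n 0), LB 0 j ≤ h 0 j ∧ h 0 j ≤ UB 0 j) :
    ∀ l, l < m' → ∀ i : Fin (n (l + 1)), h (l + 1) i = max (a l i) 0 := by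
  intro l hl i
  obtain ⟨ha, hpos, hub, hbpos, hbub, hz⟩ := hmilp l hl i
  rcases hz with hz0 | hz1
  · rw [hz0, mul_zero] at hub
    have hh : h (l + 1) i = 0 := le_antisymm hub hpos
    have : a l i ≤ 0 := by rw [ha, hh]; linarith
    rw [hh, max_eq_right this]
  · rw [hz1] at hbub
    simp at hbub
    have hb0 : hbar l i = 0 := le_antisymm hbub hbpos
    have : a l i = h (l + 1) i := by rw [ha, hb0]; ring
    rw [this, max_eq_left hpos]
end

section
/- (The MILP value set equals the true pre-activation value set.) Consider a fully connected feed-forward ReLU network with layers 0,…,m (m ≥ 1): widths n_0,…,n_m ≥ 1, weight matrices W^{(l)} ∈ ℝ^{n_l×n_{l+1}} and biases b^{(l+1)} ∈ ℝ^{n_{l+1}}; on input x it computes h^{(0)} = x, a^{(l+1)}(x) = (W^{(l)})ᵀ h^{(l)} + b^{(l+1)}, h^{(l+1)}_j = max(a^{(l+1)}_j, 0). Let LB⁰, UB⁰ ∈ ℝ^{n_0} and let LB^{(l)}, UB^{(l)} ∈ ℝ^{n_l} (l ∈ {1,…,m−1}) be valid bounds, meaning LB^{(l)}_j ≤ a^{(l)}_j(x)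 ≤ UB^{(l)}_j for every input x with LB⁰ ≤ x ≤ UB⁰ componentwise. Fix a neuron index n in layer m. Then the set of values { a^{(m)}_n taken over all points feasible for the MILP constraints ((W^{(l)})ᵀ h^{(l)} + b^{(l+1)} = a^{(l+1)}; a^{(l)} = h^{(l)} − h̄^{(l)}; 0 ≤ h^{(l)}_j ≤ UB^{(l)}_j z^{(l)}_j; 0 ≤ h̄^{(l)}_j ≤ −LB^{(l)}_j(1 − z^{(l)}_j); z^{(l)}_j ∈ {0,1}; LB⁰ ≤ h^{(0)} ≤ UB⁰) } is equal to the set { a^{(m)}_n(x) : x ∈ ℝ^{n_0}, LB⁰ ≤ x ≤ UB⁰ }. In particular, the MILP optimal value equals the exact maximum of a^{(m)}_n over the input box. -/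
/-- The activation output `h^{(l)}` of layer `l` of a fully connected feed-forward
ReLU network with weights `W` and biases `b` (where `b l` is `b^{(l+1)}`), on input `x`. -/
noncomputable def netH (n : ℕ → ℕ)
    (W : ∀ l : ℕ, Matrix (Fin (n l)) (Fin (n (l + 1))) ℝ)
    (b : ∀ l : ℕ, Fin (n (l + 1)) → ℝ)
    (x : Fin (n 0) → ℝ) : ∀ l : ℕ, Fin (n l) → ℝ
  | 0 => x
  | l + 1 => fun i => max ((∑ j : Fin (n l), W l j i * netH n W b x l j) + b l i) 0

/-- The pre-activation `a^{(l+1)}` of layer `l + 1` of the network on input `x`. -/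
noncomputable def netA (n : ℕ → ℕ)
    (W : ∀ l : ℕ, Matrix (Fin (n l)) (Fin (n (l + 1))) ℝ)
    (b : ∀ l : ℕ, Fin (n (l + 1)) → ℝ)
    (x : Fin (n 0) → ℝ) (l : ℕ) : Fin (n (l + 1)) → ℝ :=
  fun i => (∑ j : Fin (n l), W l j i * netH n W b x l j) + b l i

/-- The MILP value set equals the true pre-activation value set: if the hidden-layer
bounds `LB^{(l)}, UB^{(l)}` are valid over the input box `[LB⁰, UB⁰]`, then the set of
values of `a^{(m)}_nIdx` over all MILP-feasible points equals the set of values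
`a^{(m)}_nIdx(x)` over all inputs `x` in the box (here `m = m' + 1 ≥ 1`). In
particular the MILP optimal value equals the exact maximum over the input box. -/
theorem milp_value_set_eq_true_value_set (m' : ℕ)
    (n : ℕ → ℕ) (hwidth : ∀ l, l ≤ m' + 1 → 1 ≤ n l)
    (W : ∀ l : ℕ, Matrix (Fin (n l)) (Fin (n (l + 1))) ℝ)
    (b : ∀ l : ℕ, Fin (n (l + 1)) → ℝ)
    (LB UB : ∀ l : ℕ, Fin (n l) → ℝ)
    (hvalid : ∀ x : Fin (n 0) → ℝ, (∀ j, LB 0 j ≤ x j ∧ x j ≤ UB 0 j) →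
      ∀ l, l < m' → ∀ i : Fin (n (l + 1)),
        LB (l + 1) i ≤ netA n W b x l i ∧ netA n W b x l i ≤ UB (l + 1) i)
    (nIdx : Fin (n (m' + 1))) :
    {v : ℝ | ∃ (h : ∀ l : ℕ, Fin (n l) → ℝ) (a hbar z : ∀ l : ℕ, Fin (n (l + 1)) → ℝ),
        (∀ l, l ≤ m' → ∀ i : Fin (n (l + 1)),
          (∑ j : Fin (n l), W l j i * h l j) + b l i = a l i) ∧
        (∀ l, l < m' → ∀ i : Fin (n (l + 1)),
          a l i = h (l + 1) i - hbar l i ∧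
          0 ≤ h (l + 1) i ∧ h (l + 1) i ≤ UB (l + 1) i * z l i ∧
          0 ≤ hbar l i ∧ hbar l i ≤ -(LB (l + 1) i) * (1 - z l i) ∧
          (z l i = 0 ∨ z l i = 1)) ∧
        (∀ j : Fin (n 0), LB 0 j ≤ h 0 j ∧ h 0 j ≤ UB 0 j) ∧
        v = a m' nIdx} =
      {v : ℝ | ∃ x : Fin (n 0) → ℝ,
        (∀ j, LB 0 j ≤ x j ∧ x j ≤ UB 0 j) ∧ v = netA n W b x m' nIdx} := by
  ext v
  simp only [Set.mem_setOf_eq]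
  constructor
  · rintro ⟨h, a, hbar, z, heq, hmid, hbox, hv⟩
    refine ⟨h 0, hbox, ?_⟩
    have key : ∀ l, l ≤ m' → ∀ i : Fin (n l), h l i = netH n W b (h 0) l i := by
      intro l
      induction l with
      | zero => intro _ i; simp [netH]
      | succ l ih =>
        intro hl i
        have hl' : l < m' := hl
        obtain ⟨ha, hp, hub, hbp, hbu, hz⟩ := hmid l hl' i
        have hA : a l i = netA n W b (h 0) l i := by
          rw [← heq l (le_of_lt hl')]
          simp only [netA]
          congr 1
          exact Finset.sum_congr rfl fun j _ => by rw [ih (le_of_lt hl') j]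
        have : netH n W b (h 0) (l + 1) i = max (netA n W b (h 0) l i) 0 := by
          simp [netH, netA]
        rw [this, ← hA]
        rcases hz with hz0 | hz1
        · have hh0 : h (l + 1) i = 0 := le_antisymm (by simpa [hz0] using hub) hp
          have : a l i ≤ 0 := by rw [ha, hh0]; linarith
          rw [max_eq_right this, hh0]
        · have hb0 : hbar l i = 0 := le_antisymm (by simpa [hz1] using hbu) hbp
          have : a l i = h (l + 1) i := by rw [ha, hb0]; ring
          rw [this, max_eq_left hp]
    rw [hv, ← heq m' le_rfl nIdx]
    simp only [netA]
    congr 1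
    exact Finset.sum_congr rfl fun j _ => by rw [key m' le_rfl j]
  · rintro ⟨x, hbox, hv⟩
    refine ⟨netH n W b x, netA n W b x,
      fun l i => max (-(netA n W b x l i)) 0,
      fun l i => if 0 ≤ netA n W b x l i then 1 else 0, ?_, ?_, ?_, ?_⟩
    · intro l _ i; rfl
    · intro l hl i
      obtain ⟨hLB, hUB⟩ := hvalid x hbox l hl i
      have hH : netH n W b x (l + 1) i = max (netA n W b x l i) 0 := by
        simp [netH, netA]
      rw [hH]
      by_cases hc : 0 ≤ netA n W b x l i
      · simp only [if_pos hc]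
        refine ⟨?_, le_max_right _ _, ?_, le_max_right _ _, ?_, Or.inr trivial⟩
        · rw [max_eq_left hc, max_eq_right (by linarith : -(netA n W b x l i) ≤ 0)]
          ring
        · rw [max_eq_left hc]; linarith
        · rw [max_eq_right (by linarith : -(netA n W b x l i) ≤ 0)]; simp
      · push_neg at hc
        simp only [if_neg (not_le.mpr hc)]
        refine ⟨?_, le_max_right _ _, ?_, le_max_right _ _, ?_, Or.inl trivial⟩
        · rw [max_eq_right (le_of_lt hc), max_eq_left (by linarith : 0 ≤ -(netA n W b x l i))]
          ring
        · rw [max_eq_right (le_of_lt hc)]; simp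
        · rw [max_eq_left (by linarith : 0 ≤ -(netA n W b x l i))]; linarith
    · intro j; simpa [netH] using hbox j
    · exact hv
end
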